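/- For half-integers j ≥ 0 and k ≥ 0, the difference of area eigenvalues ΔA(j,k) = √((j+k)(j+k+1)) − √(j(j+1)) satisfies ΔA(j,k) → k as j → ∞; more precisely, for all j > 0, |√((j+k)(j+k+1)) − √(j(j+1)) − k| ≤ k(k+1)/(2j). -/
import Mathlib


open Filter

lemma area_diff_bound (k : ℝ) (hk : 0 ≤ k) (j : ℝ) (hj : 0 < j) :
    |Real.sqrt ((j + k) * (j + k + 1)) - Real.sqrt (j * (j + 1)) - k|
      ≤ k * (k + 1) / (2 * j) := by
  set s := Real.sqrt (j * (j + 1)) with hsdef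
  set t := Real.sqrt ((j + k) * (j + k + 1)) with htdef
  have hs0 : 0 ≤ s := Real.sqrt_nonneg _
  have ht0 : 0 ≤ t := Real.sqrt_nonneg _
  have hs : s ^ 2 = j * (j + 1) := Real.sq_sqrt (by nlinarith)
  have ht : t ^ 2 = (j + k) * (j + k + 1) := Real.sq_sqrt (by nlinarith)
  have hjs : j ≤ s := by
    rw [hsdef]
    apply Real.le_sqrt' hj |>.mpr
    nlinarith
  have hs2 : s ≤ j + 1 / 2 := by
    have : s ^ 2 ≤ (j + 1 / 2) ^ 2 := by rw [hs]; nlinarith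
    nlinarith
  have hjt : j + k ≤ t := by
    rcases eq_or_lt_of_le (by linarith : (0:ℝ) < j + k).le with h | h
    · linarith [ht0]
    · rw [htdef]
      apply Real.le_sqrt' h |>.mpr
      nlinarith
  -- t ≥ s + k
  have hts : s + k ≤ t := by
    have h1 : (s + k) ^ 2 ≤ t ^ 2 := by nlinarith [hs, ht]
    nlinarith
  have h2j : (0:ℝ) < 2 * j := by linarith
  rw [abs_le]
  constructor
  · have : 0 ≤ k * (k + 1) / (2 * j) := by positivity
    linarith
  · rw [le_div_iff₀ h2j]
    nlinarith [hs, ht, mul_nonneg hk (sub_nonneg.mpr hjs),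
      mul_nonneg (sub_nonneg.mpr hts) (by linarith : (0:ℝ) ≤ t + s + k - 2 * j)]

/-- The difference of area eigenvalues `ΔA(j,k) = √((j+k)(j+k+1)) − √(j(j+1))`
tends to `k` as `j → ∞`; quantitatively, for `j > 0`,
`|√((j+k)(j+k+1)) − √(j(j+1)) − k| ≤ k(k+1)/(2j)`. -/
theorem area_difference_limit (k : ℝ) (hk : 0 ≤ k) :
    Tendsto (fun j : ℝ =>
        Real.sqrt ((j + k) * (j + k + 1)) - Real.sqrt (j * (j + 1)))
      atTop (nhds k) ∧
    ∀ j : ℝ, 0 < j →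
      |Real.sqrt ((j + k) * (j + k + 1)) - Real.sqrt (j * (j + 1)) - k|
        ≤ k * (k + 1) / (2 * j) := by
  refine ⟨?_, fun j hj => area_diff_bound k hk j hj⟩
  have hg : Tendsto (fun j : ℝ => k * (k + 1) / (2 * j)) atTop (nhds 0) :=
    tendsto_const_nhds.div_atTop (tendsto_id.const_mul_atTop two_pos)
  have h0 : Tendsto (fun j : ℝ =>
      Real.sqrt ((j + k) * (j + k + 1)) - Real.sqrt (j * (j + 1)) - k)
      atTop (nhds 0) := by
    apply squeeze_zero_norm' ?_ hg
    filter_upwards [eventually_gt_atTop 0] with j hj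
    simpa [Real.norm_eq_abs] using area_diff_bound k hk j hj
  have := h0.add (tendsto_const_nhds (x := k))
  simpa using this
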